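/- (Mistake bound for PRIL, general case.) Let γ > 0, R² = max_{t∈[T]} ‖x^t‖² and c = min_{t∈[T]} (y_r^t − y_l^t). Then for any w ∈ ℝ^d and θ ∈ ℝ^{K−1} with ‖w‖² + ‖θ‖² = 1, setting d_i^t = max(0, γ − z_i^t(w·x^t − θ_i)) for i ∈ Ī^t and D² = Σ_{t=1}^T Σ_{i∈Ī^t} (d_i^t)², the PRIL iterates satisfy Σ_{t=1}^T L_I^{MAE}(w^t·x^t, θ^t, y_l^t, y_r^t) ≤ (D + √(R² + 1))²(K − c − 1)/γ². -/

import Mathlib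

open Finset

noncomputable def dotp {d : ℕ} (w x : Fin d → ℝ) : ℝ := ∑ i, w i * x i

noncomputable def zval (yl : ℕ) (i : ℕ) : ℝ := if i < yl then 1 else -1

def Ibar (K yl yr : ℕ) : Finset ℕ := Finset.Icc 1 (yl - 1) ∪ Finset.Icc yr (K - 1)

noncomputable def tau {d : ℕ} (K yl yr : ℕ) (x w : Fin d → ℝ) (θ : ℕ → ℝ) (i : ℕ) : ℝ :=
  if i ∈ Ibar K yl yr ∧ zval yl i * (dotp w x - θ i) ≤ 0 then zval yl i else 0

noncomputable def LMAE (K : ℕ) (f : ℝ) (θ : ℕ → ℝ) (yl yr : ℕ) : ℝ :=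
  (∑ i ∈ Finset.Icc 1 (yl - 1), if f < θ i then (1:ℝ) else 0) +
  (∑ i ∈ Finset.Icc yr (K - 1), if θ i ≤ f then (1:ℝ) else 0)

noncomputable def LIMC (K : ℕ) (f : ℝ) (yl yr : ℕ) (θ : ℕ → ℝ) : ℝ :=
  (∑ i ∈ Finset.Icc 1 (yl - 1), max 0 (θ i - f)) +
  (∑ i ∈ Finset.Icc yr (K - 1), max 0 (f - θ i))

noncomputable def mcount {d : ℕ} (K yl yr : ℕ) (x w : Fin d → ℝ) (θ : ℕ → ℝ) : ℕ :=
  ((Ibar K yl yr).filter (fun i => zval yl i * (dotp w x - θ i) ≤ 0)).card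

noncomputable def Sset {d : ℕ} (K yl yr : ℕ) (x w : Fin d → ℝ) (θ : ℕ → ℝ) : Finset ℕ :=
  (Ibar K yl yr).filter (fun i => zval yl i * (dotp w x - θ i) ≤ 0)

lemma tau_eq {d : ℕ} (K yl yr : ℕ) (x w : Fin d → ℝ) (θ : ℕ → ℝ) (i : ℕ) :
    tau K yl yr x w θ i = if i ∈ Sset K yl yr x w θ then zval yl i else 0 := by
  simp [tau, Sset, Finset.mem_filter]

lemma Ibar_subset {K yl yr : ℕ} (h1 : 1 ≤ yl) (h2 : yl ≤ yr) (h3 : yr ≤ K) :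
    Ibar K yl yr ⊆ Finset.Icc 1 (K-1) := by
  apply Finset.union_subset <;> apply Finset.Icc_subset_Icc <;> omega

lemma zval_sq (yl i : ℕ) : zval yl i ^ 2 = 1 := by unfold zval; split <;> norm_num

lemma zval_abs (yl i : ℕ) : |zval yl i| = 1 := by unfold zval; split <;> norm_num

lemma sum_tau_mul {d : ℕ} {K yl yr : ℕ} (x w : Fin d → ℝ) (θ : ℕ → ℝ)
    (h1 : 1 ≤ yl) (h2 : yl ≤ yr) (h3 : yr ≤ K) (g : ℕ → ℝ) :
    ∑ i ∈ Finset.Icc 1 (K-1), tau K yl yr x w θ i * g i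
      = ∑ i ∈ Sset K yl yr x w θ, zval yl i * g i := by
  have hsub : Sset K yl yr x w θ ⊆ Finset.Icc 1 (K-1) :=
    (Finset.filter_subset _ _).trans (Ibar_subset h1 h2 h3)
  rw [← Finset.sum_subset hsub (fun i _ hi => by rw [tau_eq, if_neg hi, zero_mul])]
  exact Finset.sum_congr rfl fun i hi => by rw [tau_eq, if_pos hi]

lemma dotp_add_smul {d : ℕ} (u a b : Fin d → ℝ) (s : ℝ) :
    dotp u (a + s • b) = dotp u a + s * dotp u b := by
  simp only [dotp, Pi.add_apply, Pi.smul_apply, smul_eq_mul, Finset.mul_sum,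
    ← Finset.sum_add_distrib]
  exact Finset.sum_congr rfl fun i _ => by ring

lemma sum_add_smul_sq {d : ℕ} (a b : Fin d → ℝ) (s : ℝ) :
    ∑ i, ((a + s • b) i)^2 = (∑ i, a i^2) + (2*s*(dotp a b) + s^2 * ∑ i, b i^2) := by
  simp only [dotp, Pi.add_apply, Pi.smul_apply, smul_eq_mul, Finset.mul_sum,
    ← Finset.sum_add_distrib]
  exact Finset.sum_congr rfl fun i _ => by ring

lemma sum_sub_sq (s : Finset ℕ) (a b : ℕ → ℝ) :
    ∑ i ∈ s, (a i - b i)^2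
      = (∑ i ∈ s, a i^2) + (-(2*(∑ i ∈ s, b i * a i)) + ∑ i ∈ s, b i^2) := by
  simp only [Finset.mul_sum, ← Finset.sum_neg_distrib, ← Finset.sum_add_distrib]
  exact Finset.sum_congr rfl fun i _ => by ring

lemma sqrt_cs (A B C E : ℝ) (hA : 0 ≤ A) (hB : 0 ≤ B) (hC : 0 ≤ C) (hE : 0 ≤ E) :
    Real.sqrt A * Real.sqrt C + Real.sqrt B * Real.sqrt E
      ≤ Real.sqrt (A + B) * Real.sqrt (C + E) := by
  have h := Real.sum_sqrt_mul_sqrt_le (Finset.univ : Finset (Fin 2))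
      (f := fun j => if j = 0 then A else B) (g := fun j => if j = 0 then C else E)
      (by intro i; split <;> assumption)
      (by intro i; split <;> assumption)
  simpa [Fin.sum_univ_two] using h

lemma Sset_subset {d : ℕ} (K yl yr : ℕ) (x w : Fin d → ℝ) (θ : ℕ → ℝ) :
    Sset K yl yr x w θ ⊆ Ibar K yl yr := Finset.filter_subset _ _

lemma Sset_card_le {d : ℕ} (K yl yr : ℕ) (x w : Fin d → ℝ) (θ : ℕ → ℝ) :
    (Sset K yl yr x w θ).card ≤ (Ibar K yl yr).card := Finset.card_filter_le _ _

lemma mem_Sset {d : ℕ} {K yl yr : ℕ} {x w : Fin d → ℝ} {θ : ℕ → ℝ} {i : ℕ}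
    (hi : i ∈ Sset K yl yr x w θ) : zval yl i * (dotp w x - θ i) ≤ 0 :=
  (Finset.mem_filter.mp hi).2

set_option maxHeartbeats 1000000 in
/-- Mistake bound for PRIL, general case. -/
theorem pril_mistake_bound_general
    {d K T : ℕ} (hd : 1 ≤ d) (hK : 2 ≤ K) (hT : 1 ≤ T)
    (x : ℕ → Fin d → ℝ) (yl yr : ℕ → ℕ)
    (hy : ∀ t ∈ Finset.Icc 1 T, 1 ≤ yl t ∧ yl t ≤ yr t ∧ yr t ≤ K)
    (w : ℕ → Fin d → ℝ) (θ : ℕ → ℕ → ℝ)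
    (hw1 : w 1 = 0) (hθ1 : ∀ i, θ 1 i = 0)
    (hwrec : ∀ t ∈ Finset.Icc 1 T,
      w (t+1) = w t + (∑ i ∈ Finset.Icc 1 (K-1),
        tau K (yl t) (yr t) (x t) (w t) (θ t) i) • x t)
    (hθrec : ∀ t ∈ Finset.Icc 1 T, ∀ i,
      θ (t+1) i = θ t i - tau K (yl t) (yr t) (x t) (w t) (θ t) i)
    (R2 : ℝ)
    (hR2 : R2 = (Finset.Icc 1 T).sup' (Finset.nonempty_Icc.mpr hT)
      (fun t => ∑ i, (x t i) ^ 2))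
    (c : ℕ)
    (hc : c = (Finset.Icc 1 T).inf' (Finset.nonempty_Icc.mpr hT)
      (fun t => yr t - yl t))
    (γ : ℝ) (hγ : 0 < γ)
    (wv : Fin d → ℝ) (θv : ℕ → ℝ)
    (hnorm : (∑ i, wv i ^ 2) + (∑ i ∈ Finset.Icc 1 (K-1), θv i ^ 2) = 1)
    (D : ℝ) (hD : 0 ≤ D)
    (hD2 : D ^ 2 = ∑ t ∈ Finset.Icc 1 T, ∑ i ∈ Ibar K (yl t) (yr t),
      (max 0 (γ - zval (yl t) i * (dotp wv (x t) - θv i))) ^ 2) :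
    ∑ t ∈ Finset.Icc 1 T, LMAE K (dotp (w t) (x t)) (θ t) (yl t) (yr t)
      ≤ (D + Real.sqrt (R2 + 1)) ^ 2 * ((K : ℝ) - (c : ℝ) - 1) / γ ^ 2 := by
  classical
  obtain ⟨S, hS⟩ : ∃ S : ℕ → Finset ℕ,
      S = fun t => Sset K (yl t) (yr t) (x t) (w t) (θ t) := ⟨_, rfl⟩
  have hSt : ∀ t, S t = Sset K (yl t) (yr t) (x t) (w t) (θ t) := fun t => by rw [hS]
  obtain ⟨m, hm⟩ : ∃ m : ℕ → ℝ, m = fun t => ((S t).card : ℝ) := ⟨_, rfl⟩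
  obtain ⟨dd, hdd⟩ : ∃ dd : ℕ → ℕ → ℝ,
      dd = fun t i => max 0 (γ - zval (yl t) i * (dotp wv (x t) - θv i)) := ⟨_, rfl⟩
  obtain ⟨E, hE⟩ : ∃ E : ℕ → ℝ, E = fun t => ∑ i ∈ S t, dd t i := ⟨_, rfl⟩
  obtain ⟨P, hP⟩ : ∃ P : ℕ → ℝ,
      P = fun t => dotp wv (w t) + ∑ i ∈ Finset.Icc 1 (K-1), θv i * θ t i := ⟨_, rfl⟩
  obtain ⟨NN, hNN⟩ : ∃ NN : ℕ → ℝ,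
      NN = fun t => (∑ i, (w t i)^2) + ∑ i ∈ Finset.Icc 1 (K-1), (θ t i)^2 := ⟨_, rfl⟩
  have hmnn : ∀ t, 0 ≤ m t := fun t => by rw [hm]; exact Nat.cast_nonneg _
  have hddnn : ∀ t i, 0 ≤ dd t i := fun t i => by rw [hdd]; exact le_max_left _ _
  have hR2nn : 0 ≤ R2 := by
    rw [hR2]
    refine le_trans ?_ (Finset.le_sup' _ (Finset.mem_Icc.mpr ⟨le_refl 1, hT⟩))
    positivity
  -- per-trial step
  have step : ∀ t ∈ Finset.Icc 1 T,
      (P t + (γ * m t - E t) ≤ P (t+1)) ∧ NN (t+1) ≤ NN t + (m t^2 * R2 + m t) := by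
    intro t ht
    obtain ⟨hyl, hylr, hyrK⟩ := hy t ht
    have hw' := hwrec t ht
    have hθ' := hθrec t ht
    obtain ⟨s, hs⟩ : ∃ s : ℝ,
        s = ∑ i ∈ Finset.Icc 1 (K-1), tau K (yl t) (yr t) (x t) (w t) (θ t) i := ⟨_, rfl⟩
    rw [← hs] at hw'
    have hsum : ∀ g : ℕ → ℝ,
        ∑ i ∈ Finset.Icc 1 (K-1), tau K (yl t) (yr t) (x t) (w t) (θ t) i * g i
          = ∑ i ∈ S t, zval (yl t) i * g i := fun g => by
      rw [hSt t]
      exact sum_tau_mul (x t) (w t) (θ t) hyl hylr hyrK g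
    have hseq : s = ∑ i ∈ S t, zval (yl t) i := by
      rw [hs]
      simpa using hsum (fun _ => 1)
    have hzz : ∀ i ∈ S t, zval (yl t) i * (dotp (w t) (x t) - θ t i) ≤ 0 := by
      intro i hi
      rw [hSt t] at hi
      exact mem_Sset hi
    constructor
    · -- progress bound
      have hPa : P (t+1) = P t + ∑ i ∈ S t, zval (yl t) i * (dotp wv (x t) - θv i) := by
        simp only [hP, hw', dotp_add_smul]
        have hθs : ∑ i ∈ Finset.Icc 1 (K-1), θv i * θ (t+1) i
            = (∑ i ∈ Finset.Icc 1 (K-1), θv i * θ t i)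
              - ∑ i ∈ Finset.Icc 1 (K-1), tau K (yl t) (yr t) (x t) (w t) (θ t) i * θv i := by
          rw [← Finset.sum_sub_distrib]
          exact Finset.sum_congr rfl fun i _ => by rw [hθ' i]; ring
        rw [hθs, hsum (fun i => θv i)]
        have hsA : s * dotp wv (x t) = ∑ i ∈ S t, zval (yl t) i * dotp wv (x t) := by
          rw [hseq, Finset.sum_mul]
        rw [hsA]
        have hcomb : ∑ i ∈ S t, zval (yl t) i * dotp wv (x t)
            - ∑ i ∈ S t, zval (yl t) i * θv i
            = ∑ i ∈ S t, zval (yl t) i * (dotp wv (x t) - θv i) := by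
          rw [← Finset.sum_sub_distrib]
          exact Finset.sum_congr rfl fun i _ => by ring
        linarith [hcomb]
      rw [hPa]
      have hge : ∀ i ∈ S t, γ - dd t i ≤ zval (yl t) i * (dotp wv (x t) - θv i) := by
        intro i _
        have := le_max_right (0:ℝ) (γ - zval (yl t) i * (dotp wv (x t) - θv i))
        simp only [hdd]
        linarith
      have := Finset.sum_le_sum hge
      rw [Finset.sum_sub_distrib, Finset.sum_const, nsmul_eq_mul] at this
      simp only [hE, hm]
      linarith [this]
    · -- norm bound
      have hNa : NN (t+1) = NN t
          + (2 * (∑ i ∈ S t, zval (yl t) i * (dotp (w t) (x t) - θ t i))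
            + (s^2 * ∑ i, (x t i)^2 + m t)) := by
        have h1 : ∑ i, (w (t+1) i)^2
            = (∑ i, (w t i)^2) + (2*s*(dotp (w t) (x t)) + s^2 * ∑ i, (x t i)^2) := by
          rw [hw']; exact sum_add_smul_sq (w t) (x t) s
        have h2 : ∑ i ∈ Finset.Icc 1 (K-1), (θ (t+1) i)^2
            = (∑ i ∈ Finset.Icc 1 (K-1), (θ t i)^2)
              + (-(2*(∑ i ∈ Finset.Icc 1 (K-1),
                   tau K (yl t) (yr t) (x t) (w t) (θ t) i * θ t i))
                 + ∑ i ∈ Finset.Icc 1 (K-1),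
                     (tau K (yl t) (yr t) (x t) (w t) (θ t) i)^2) := by
          rw [Finset.sum_congr rfl (fun i _ => by rw [hθ' i])]
          exact sum_sub_sq _ _ _
        have h3 : ∑ i ∈ Finset.Icc 1 (K-1), (tau K (yl t) (yr t) (x t) (w t) (θ t) i)^2
            = m t := by
          calc ∑ i ∈ Finset.Icc 1 (K-1), (tau K (yl t) (yr t) (x t) (w t) (θ t) i)^2
              = ∑ i ∈ Finset.Icc 1 (K-1), tau K (yl t) (yr t) (x t) (w t) (θ t) i
                  * tau K (yl t) (yr t) (x t) (w t) (θ t) i := by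
                exact Finset.sum_congr rfl fun i _ => sq _
            _ = ∑ i ∈ S t, zval (yl t) i * tau K (yl t) (yr t) (x t) (w t) (θ t) i :=
                hsum _
            _ = ∑ i ∈ S t, (1:ℝ) := by
                refine Finset.sum_congr rfl fun i hi => ?_
                rw [hSt t] at hi
                rw [tau_eq, if_pos hi, ← sq, zval_sq]
            _ = m t := by simp [hm]
        have h4 : 2*s*(dotp (w t) (x t))
              - 2*(∑ i ∈ Finset.Icc 1 (K-1),
                   tau K (yl t) (yr t) (x t) (w t) (θ t) i * θ t i)
            = 2 * ∑ i ∈ S t, zval (yl t) i * (dotp (w t) (x t) - θ t i) := by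
          have e : ∑ i ∈ S t, zval (yl t) i * (dotp (w t) (x t) - θ t i)
              = (∑ i ∈ S t, zval (yl t) i) * dotp (w t) (x t)
                - ∑ i ∈ S t, zval (yl t) i * θ t i := by
            rw [Finset.sum_mul, ← Finset.sum_sub_distrib]
            exact Finset.sum_congr rfl fun i _ => by ring
          rw [hsum (fun i => θ t i), hseq, e]
          ring
        simp only [hNN]
        rw [h1, h2, h3]
        linarith [h4]
      rw [hNa]
      have hc1 : ∑ i ∈ S t, zval (yl t) i * (dotp (w t) (x t) - θ t i) ≤ 0 :=
        Finset.sum_nonpos hzz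
      have hxle : ∑ i, (x t i)^2 ≤ R2 := by
        rw [hR2]; exact Finset.le_sup' (fun t => ∑ i, (x t i)^2) ht
      have hxnn : (0:ℝ) ≤ ∑ i, (x t i)^2 := by positivity
      have hsabs : |s| ≤ m t := by
        rw [hseq]
        calc |∑ i ∈ S t, zval (yl t) i| ≤ ∑ i ∈ S t, |zval (yl t) i| :=
              Finset.abs_sum_le_sum_abs _ _
          _ = m t := by simp [zval_abs, hm]
      have hs2 : s^2 ≤ m t^2 := by
        rw [← sq_abs s]
        exact pow_le_pow_left₀ (abs_nonneg s) hsabs 2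
      have : s^2 * (∑ i, (x t i)^2) ≤ m t^2 * R2 := by
        calc s^2 * (∑ i, (x t i)^2) ≤ m t^2 * (∑ i, (x t i)^2) := by
              exact mul_le_mul_of_nonneg_right hs2 hxnn
          _ ≤ m t^2 * R2 := by
              exact mul_le_mul_of_nonneg_left hxle (by positivity)
      linarith
  -- accumulate
  have main : ∀ n, n ≤ T →
      (γ * (∑ t ∈ Finset.Icc 1 n, m t) - (∑ t ∈ Finset.Icc 1 n, E t) ≤ P (n+1))
      ∧ NN (n+1) ≤ ∑ t ∈ Finset.Icc 1 n, (m t^2 * R2 + m t) := by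
    intro n
    induction n with
    | zero =>
      intro _
      rw [show Finset.Icc 1 0 = (∅ : Finset ℕ) from Finset.Icc_eq_empty (by omega)]
      simp [hP, hNN, hw1, hθ1, dotp]
    | succ n ih =>
      intro hn
      obtain ⟨ih1, ih2⟩ := ih (Nat.le_of_succ_le hn)
      have hst := step (n+1) (Finset.mem_Icc.mpr ⟨by omega, hn⟩)
      rw [Finset.sum_Icc_succ_top (by omega : 1 ≤ n+1),
        Finset.sum_Icc_succ_top (by omega : 1 ≤ n+1),
        Finset.sum_Icc_succ_top (by omega : 1 ≤ n+1)]
      constructor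
      · have := hst.1; nlinarith [this]
      · have := hst.2; linarith [this]
  obtain ⟨h1, h2⟩ := main T le_rfl
  obtain ⟨M, hM⟩ : ∃ M : ℝ, M = ∑ t ∈ Finset.Icc 1 T, m t := ⟨_, rfl⟩
  rw [← hM] at h1
  have hMnn : 0 ≤ M := by rw [hM]; exact Finset.sum_nonneg fun t _ => hmnn t
  -- c facts
  have hcle : ∀ t ∈ Finset.Icc 1 T, c ≤ yr t - yl t := by
    intro t ht; rw [hc]; exact Finset.inf'_le _ ht
  have h1T : (1:ℕ) ∈ Finset.Icc 1 T := Finset.mem_Icc.mpr ⟨le_refl 1, hT⟩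
  have hcK : c + 1 ≤ K := by
    have h := hcle 1 h1T
    obtain ⟨a, b, cc⟩ := hy 1 h1T
    omega
  have hKcnat : ((K - 1 - c : ℕ) : ℝ) = (K:ℝ) - (c:ℝ) - 1 := by
    have : ((K - 1 - c : ℕ) : ℝ) = ((K:ℕ):ℝ) - 1 - (c:ℝ) := by
      rw [Nat.cast_sub (by omega), Nat.cast_sub (by omega)]
      norm_num
    rw [this]; ring
  have hKcnn : (0:ℝ) ≤ (K:ℝ) - (c:ℝ) - 1 := by
    rw [← hKcnat]; positivity
  -- m t ≤ K - c - 1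
  have hmKc : ∀ t ∈ Finset.Icc 1 T, m t ≤ (K:ℝ) - (c:ℝ) - 1 := by
    intro t ht
    obtain ⟨hyl, hylr, hyrK⟩ := hy t ht
    have hcard : (S t).card ≤ K - 1 - c := by
      have ha : (S t).card ≤ (Ibar K (yl t) (yr t)).card := by
        rw [hSt t]
        exact Sset_card_le _ _ _ _ _ _
      have hb : (Ibar K (yl t) (yr t)).card
          ≤ (Finset.Icc 1 (yl t - 1)).card + (Finset.Icc (yr t) (K-1)).card :=
        Finset.card_union_le _ _
      rw [Nat.card_Icc, Nat.card_Icc] at hb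
      have hcc := hcle t ht
      omega
    rw [← hKcnat]
    simp only [hm]
    exact_mod_cast hcard
  -- LMAE ≤ m t
  have hLM : ∑ t ∈ Finset.Icc 1 T, LMAE K (dotp (w t) (x t)) (θ t) (yl t) (yr t) ≤ M := by
    rw [hM]
    refine Finset.sum_le_sum fun t ht => ?_
    obtain ⟨hyl, hylr, hyrK⟩ := hy t ht
    have hdisj : Disjoint (Finset.Icc 1 (yl t - 1)) (Finset.Icc (yr t) (K-1)) := by
      rw [Finset.disjoint_left]
      intro i hi hj
      rw [Finset.mem_Icc] at hi hj
      omega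
    have hmt : m t = (∑ i ∈ Finset.Icc 1 (yl t - 1),
          if zval (yl t) i * (dotp (w t) (x t) - θ t i) ≤ 0 then (1:ℝ) else 0)
        + ∑ i ∈ Finset.Icc (yr t) (K-1),
          if zval (yl t) i * (dotp (w t) (x t) - θ t i) ≤ 0 then (1:ℝ) else 0 := by
      simp only [hm, hS, Sset, Ibar]
      rw [Finset.filter_union, Finset.card_union_of_disjoint
        (Finset.disjoint_filter_filter hdisj)]
      push_cast
      rw [Finset.sum_boole, Finset.sum_boole]
    rw [hmt, LMAE]
    have hp1 : ∀ i ∈ Finset.Icc 1 (yl t - 1),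
        (if dotp (w t) (x t) < θ t i then (1:ℝ) else 0)
          ≤ if zval (yl t) i * (dotp (w t) (x t) - θ t i) ≤ 0 then (1:ℝ) else 0 := by
      intro i hi
      rw [Finset.mem_Icc] at hi
      have hz : zval (yl t) i = 1 := by
        unfold zval; rw [if_pos (by omega)]
      rw [hz, one_mul]
      split_ifs with ha hb <;> try norm_num
      exact hb (by linarith)
    have hp2 : ∀ i ∈ Finset.Icc (yr t) (K-1),
        (if θ t i ≤ dotp (w t) (x t) then (1:ℝ) else 0)
          ≤ if zval (yl t) i * (dotp (w t) (x t) - θ t i) ≤ 0 then (1:ℝ) else 0 := by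
      intro i hi
      rw [Finset.mem_Icc] at hi
      have hz : zval (yl t) i = -1 := by
        unfold zval; rw [if_neg (by omega)]
      rw [hz]
      split_ifs with ha hb <;> try norm_num
      exact hb (by linarith)
    exact add_le_add (Finset.sum_le_sum hp1) (Finset.sum_le_sum hp2)
  -- Cauchy–Schwarz: sum of errors
  have hEle : ∑ t ∈ Finset.Icc 1 T, E t ≤ D * Real.sqrt M := by
    have hpt : ∀ t ∈ Finset.Icc 1 T,
        E t ≤ Real.sqrt (∑ i ∈ S t, dd t i ^ 2) * Real.sqrt (m t) := by
      intro t ht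
      have h := Real.sum_mul_le_sqrt_mul_sqrt (S t) (fun i => dd t i) (fun _ => 1)
      simpa [hE, hm] using h
    calc ∑ t ∈ Finset.Icc 1 T, E t
        ≤ ∑ t ∈ Finset.Icc 1 T, Real.sqrt (∑ i ∈ S t, dd t i ^ 2) * Real.sqrt (m t) :=
          Finset.sum_le_sum hpt
      _ ≤ Real.sqrt (∑ t ∈ Finset.Icc 1 T, ∑ i ∈ S t, dd t i ^ 2)
            * Real.sqrt (∑ t ∈ Finset.Icc 1 T, m t) :=
          Real.sum_sqrt_mul_sqrt_le _ (fun t => Finset.sum_nonneg fun i _ => sq_nonneg _)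
            (fun t => hmnn t)
      _ ≤ D * Real.sqrt M := by
          rw [← hM]
          refine mul_le_mul_of_nonneg_right ?_ (Real.sqrt_nonneg _)
          rw [show D = Real.sqrt (D^2) from (Real.sqrt_sq hD).symm]
          apply Real.sqrt_le_sqrt
          rw [hD2]
          simp only [hdd]
          refine Finset.sum_le_sum fun t ht => ?_
          rw [hSt t]
          refine Finset.sum_le_sum_of_subset_of_nonneg (Sset_subset _ _ _ _ _ _)
            fun i _ _ => sq_nonneg _
  -- Cauchy–Schwarz: P ≤ sqrt NN
  have hPle : P (T+1) ≤ Real.sqrt (NN (T+1)) := by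
    have c1 : dotp wv (w (T+1))
        ≤ Real.sqrt (∑ i, wv i ^2) * Real.sqrt (∑ i, (w (T+1) i)^2) := by
      have h := Real.sum_mul_le_sqrt_mul_sqrt Finset.univ wv (w (T+1))
      simpa [dotp] using h
    have c2 : ∑ i ∈ Finset.Icc 1 (K-1), θv i * θ (T+1) i
        ≤ Real.sqrt (∑ i ∈ Finset.Icc 1 (K-1), θv i^2)
          * Real.sqrt (∑ i ∈ Finset.Icc 1 (K-1), (θ (T+1) i)^2) :=
      Real.sum_mul_le_sqrt_mul_sqrt _ _ _
    have c3 := sqrt_cs (∑ i, wv i ^2) (∑ i ∈ Finset.Icc 1 (K-1), θv i^2)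
        (∑ i, (w (T+1) i)^2) (∑ i ∈ Finset.Icc 1 (K-1), (θ (T+1) i)^2)
        (by positivity) (by positivity) (by positivity) (by positivity)
    rw [hnorm, Real.sqrt_one, one_mul] at c3
    simp only [hP, hNN]
    linarith
  -- norm accumulate bound
  have hNle : NN (T+1) ≤ M * (((K:ℝ)-(c:ℝ)-1) * R2 + 1) := by
    have hstep2 : ∀ t ∈ Finset.Icc 1 T,
        m t^2 * R2 + m t ≤ m t * (((K:ℝ)-(c:ℝ)-1) * R2 + 1) := by
      intro t ht
      have h := hmKc t ht
      have h0 := hmnn t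
      nlinarith [mul_le_mul_of_nonneg_right (mul_le_mul_of_nonneg_left h h0) hR2nn]
    calc NN (T+1) ≤ ∑ t ∈ Finset.Icc 1 T, (m t^2*R2 + m t) := h2
      _ ≤ ∑ t ∈ Finset.Icc 1 T, m t * (((K:ℝ)-(c:ℝ)-1) * R2 + 1) :=
          Finset.sum_le_sum hstep2
      _ = M * (((K:ℝ)-(c:ℝ)-1)*R2+1) := by rw [← Finset.sum_mul, ← hM]
  have key : γ * M ≤ D * Real.sqrt M
      + Real.sqrt (M * (((K:ℝ)-(c:ℝ)-1) * R2 + 1)) := by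
    have hs := Real.sqrt_le_sqrt hNle
    linarith [h1, hEle, hPle, hs]
  by_cases hKc0 : K - 1 - c = 0
  · have hKc0' : (K:ℝ) - (c:ℝ) - 1 = 0 := by rw [← hKcnat, hKc0]; norm_num
    have hM0 : M = 0 := by
      refine le_antisymm ?_ hMnn
      rw [hM]
      refine Finset.sum_nonpos fun t ht => ?_
      have hhh := hmKc t ht
      rw [hKc0'] at hhh
      exact hhh
    rw [hKc0']
    simp only [mul_zero, zero_div]
    linarith [hLM]
  · have hKc1 : (1:ℝ) ≤ (K:ℝ) - (c:ℝ) - 1 := by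
      rw [← hKcnat]
      exact_mod_cast Nat.one_le_iff_ne_zero.mpr hKc0
    have hB2 : Real.sqrt ((K:ℝ)-(c:ℝ)-1) ^ 2 = (K:ℝ)-(c:ℝ)-1 := Real.sq_sqrt hKcnn
    have hB1 : (1:ℝ) ≤ Real.sqrt ((K:ℝ)-(c:ℝ)-1) := by
      have h := Real.sqrt_le_sqrt hKc1
      rwa [Real.sqrt_one] at h
    have hsplit : Real.sqrt (M * (((K:ℝ)-(c:ℝ)-1) * R2 + 1))
        ≤ Real.sqrt M * (Real.sqrt ((K:ℝ)-(c:ℝ)-1) * Real.sqrt (R2+1)) := by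
      have hle : M * (((K:ℝ)-(c:ℝ)-1) * R2 + 1)
          ≤ M * (((K:ℝ)-(c:ℝ)-1) * (R2 + 1)) := by
        refine mul_le_mul_of_nonneg_left ?_ hMnn
        nlinarith
      calc Real.sqrt (M * (((K:ℝ)-(c:ℝ)-1) * R2 + 1))
          ≤ Real.sqrt (M * (((K:ℝ)-(c:ℝ)-1) * (R2+1))) := Real.sqrt_le_sqrt hle
        _ = Real.sqrt M * (Real.sqrt ((K:ℝ)-(c:ℝ)-1) * Real.sqrt (R2+1)) := by
            rw [Real.sqrt_mul hMnn, Real.sqrt_mul hKcnn]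
    have key2 : γ * M ≤ Real.sqrt M * (Real.sqrt ((K:ℝ)-(c:ℝ)-1)
        * (D + Real.sqrt (R2+1))) := by
      nlinarith [key, hsplit, mul_nonneg (mul_nonneg (sub_nonneg.mpr hB1) hD)
        (Real.sqrt_nonneg M)]
    have hfin : M ≤ (D + Real.sqrt (R2+1))^2 * ((K:ℝ)-(c:ℝ)-1) / γ^2 := by
      rcases eq_or_lt_of_le hMnn with hM0 | hMpos
      · rw [← hM0]
        positivity
      · rw [le_div_iff₀ (by positivity)]
        have hsq : (γ*M)^2 ≤ (Real.sqrt M * (Real.sqrt ((K:ℝ)-(c:ℝ)-1)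
            * (D + Real.sqrt (R2+1))))^2 :=
          pow_le_pow_left₀ (by positivity) key2 2
        have e1 : (Real.sqrt M * (Real.sqrt ((K:ℝ)-(c:ℝ)-1)
            * (D + Real.sqrt (R2+1))))^2
            = M * (((K:ℝ)-(c:ℝ)-1) * (D + Real.sqrt (R2+1))^2) := by
          rw [mul_pow, mul_pow, Real.sq_sqrt hMnn, hB2]
        have hsq' : γ^2 * M^2 ≤ M * (((K:ℝ)-(c:ℝ)-1) * (D + Real.sqrt (R2+1))^2) := by
          calc γ^2 * M^2 = (γ*M)^2 := by ring
            _ ≤ _ := hsq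
            _ = _ := e1
        nlinarith [hsq', hMpos]
    exact hLM.trans hfin
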